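/- The signature map, sending a Dyck nest F(α) of length n = 2k+1 to the vector (A_{k-1}, ..., A_1) where A_j = floor(d_j/2) and d_j is the number of positions strictly between the two occurrences of the letter j in F(α) — equivalently, A_j is the number of matched pairs (j'', j') nested strictly inside the pair of occurrences of j — is injective on the set of Dyck nests: two Dyck nests with equal signatures are equal. -/

import Mathlib

open Finset

/-- A nest string of length `2k+1`: it begins with the letter `0`, every letter is in
`{0,...,k}`, each `j ∈ {1,...,k}` appears exactly twice, and the pairs of positions of
equal letters form a non-crossing matching. -/
def IsNest (k : ℕ) (f : Fin (2 * k + 1) → ℕ) : Prop :=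
  f ⟨0, by omega⟩ = 0 ∧ (∀ i, f i ≤ k) ∧
  (∀ j, 1 ≤ j → j ≤ k → (univ.filter fun i => f i = j).card = 2) ∧
  ∀ a b c d : Fin (2 * k + 1), f a = f b → f c = f d → 1 ≤ f a → 1 ≤ f c →
    f a ≠ f c → a < c → c < b → ¬ b < d

/-- The binary projection: replace each first occurrence of a letter by a 0-bit
(`false`) and each second occurrence by a 1-bit (`true`). -/
def nestWord (k : ℕ) (f : Fin (2 * k + 1) → ℕ) : Fin (2 * k + 1) → Bool :=
  fun i => decide (∃ i', i' < i ∧ f i' = f i)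

/-- An anchored Dyck word of length `2k+1`, as a binary string indexed by `Fin (2k+1)`:
weight `k`, first bit `0`, and every prefix has at least as many 0-bits as 1-bits. -/
def IsAnchoredWordF (k : ℕ) (w : Fin (2 * k + 1) → Bool) : Prop :=
  w ⟨0, by omega⟩ = false ∧ (univ.filter fun i => w i = true).card = k ∧
  ∀ m : ℕ, (univ.filter fun i : Fin (2 * k + 1) => i.val < m ∧ w i = true).card ≤
           (univ.filter fun i : Fin (2 * k + 1) => i.val < m ∧ w i = false).card

/-- Position of the first occurrence of the letter `j`. -/
noncomputable def fstOcc (k : ℕ) (f : Fin (2 * k + 1) → ℕ) (j : ℕ) : ℕ :=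
  sInf {m : ℕ | ∃ h : m < 2 * k + 1, f ⟨m, h⟩ = j}

/-- Position of the second (last) occurrence of the letter `j`. -/
noncomputable def sndOcc (k : ℕ) (f : Fin (2 * k + 1) → ℕ) (j : ℕ) : ℕ :=
  sSup {m : ℕ | ∃ h : m < 2 * k + 1, f ⟨m, h⟩ = j}

/-- The pair of occurrences of `j'` lies strictly inside the pair of occurrences of `j`. -/
noncomputable def NestInside (k : ℕ) (f : Fin (2 * k + 1) → ℕ) (j j' : ℕ) : Prop :=
  fstOcc k f j < fstOcc k f j' ∧ sndOcc k f j' < sndOcc k f j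

/-- The nesting depth of the pair of the letter `j`: the number of pairs strictly
containing it. -/
noncomputable def nestDepth (k : ℕ) (f : Fin (2 * k + 1) → ℕ) (j : ℕ) : ℕ :=
  letI := Classical.decPred fun j' => 1 ≤ j' ∧ j' ≠ j ∧ NestInside k f j' j
  ((Finset.range (k + 1)).filter fun j' =>
    1 ≤ j' ∧ j' ≠ j ∧ NestInside k f j' j).card

/-- The labeling is canonical: labels `k` down to `1` are assigned to matched pairs by
decreasing height (nesting depth) and left-to-right order within each height level. -/
noncomputable def NestCanonical (k : ℕ) (f : Fin (2 * k + 1) → ℕ) : Prop :=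
  ∀ j j', 1 ≤ j → j ≤ k → 1 ≤ j' → j' ≤ k →
    (j' < j ↔ (nestDepth k f j' < nestDepth k f j ∨
      (nestDepth k f j' = nestDepth k f j ∧ fstOcc k f j < fstOcc k f j')))

/-- The signature entry `A_j`: the number of matched pairs nested strictly inside the
pair of occurrences of the letter `j`. -/
noncomputable def sigA (k : ℕ) (f : Fin (2 * k + 1) → ℕ) (j : ℕ) : ℕ :=
  letI := Classical.decPred fun j' => 1 ≤ j' ∧ j' ≠ j ∧ NestInside k f j j'
  ((Finset.range (k + 1)).filter fun j' =>
    1 ≤ j' ∧ j' ≠ j ∧ NestInside k f j j').card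

namespace DyckSig

variable {k : ℕ} {f g : Fin (2 * k + 1) → ℕ}

lemma nestInside_iff {i j : ℕ} :
    NestInside k f i j ↔ fstOcc k f i < fstOcc k f j ∧ sndOcc k f j < sndOcc k f i :=
  Iff.rfl

lemma eq_of_occ {p q i j : ℕ} {hp : p < 2 * k + 1} {hq : q < 2 * k + 1}
    (h1 : f ⟨p, hp⟩ = i) (h2 : f ⟨q, hq⟩ = j) (hpq : p = q) : i = j := by
  subst hpq; rw [← h1, ← h2]

lemma occ_spec (hf : IsNest k f) {j : ℕ} (hj1 : 1 ≤ j) (hjk : j ≤ k) :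
    1 ≤ fstOcc k f j ∧ fstOcc k f j < sndOcc k f j ∧ sndOcc k f j < 2 * k + 1 ∧
    (∃ h : fstOcc k f j < 2 * k + 1, f ⟨fstOcc k f j, h⟩ = j) ∧
    (∃ h : sndOcc k f j < 2 * k + 1, f ⟨sndOcc k f j, h⟩ = j) ∧
    ∀ i : Fin (2 * k + 1), f i = j → i.val = fstOcc k f j ∨ i.val = sndOcc k f j := by
  classical
  obtain ⟨x, y, hxy, hxyset⟩ := Finset.card_eq_two.mp (hf.2.2.1 j hj1 hjk)
  obtain ⟨a, b, hab, hset⟩ : ∃ a b : Fin (2 * k + 1), a < b ∧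
      (univ.filter fun i => f i = j) = {a, b} := by
    rcases lt_or_gt_of_ne hxy with h | h
    · exact ⟨x, y, h, hxyset⟩
    · exact ⟨y, x, h, by rw [hxyset, Finset.pair_comm]⟩
  have hmem : ∀ i : Fin (2 * k + 1), f i = j ↔ i = a ∨ i = b := by
    intro i
    have h2 : i ∈ univ.filter (fun i => f i = j) ↔ i ∈ ({a, b} : Finset (Fin (2*k+1))) := by
      rw [hset]
    simpa using h2
  have hfa : f a = j := (hmem a).mpr (Or.inl rfl)
  have hfb : f b = j := (hmem b).mpr (Or.inr rfl)
  have hab' : a.val < b.val := hab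
  have haS : a.val ∈ {m : ℕ | ∃ h : m < 2 * k + 1, f ⟨m, h⟩ = j} :=
    ⟨a.isLt, by rw [Fin.eta]; exact hfa⟩
  have hbS : b.val ∈ {m : ℕ | ∃ h : m < 2 * k + 1, f ⟨m, h⟩ = j} :=
    ⟨b.isLt, by rw [Fin.eta]; exact hfb⟩
  have hSsub : ∀ m ∈ {m : ℕ | ∃ h : m < 2 * k + 1, f ⟨m, h⟩ = j}, m = a.val ∨ m = b.val := by
    rintro m ⟨h, hm⟩
    rcases (hmem _).mp hm with h' | h'
    · exact Or.inl (congrArg Fin.val h')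
    · exact Or.inr (congrArg Fin.val h')
  have hbdd : BddAbove {m : ℕ | ∃ h : m < 2 * k + 1, f ⟨m, h⟩ = j} := by
    refine ⟨2 * k + 1, ?_⟩
    rintro m ⟨h, -⟩
    omega
  have hfst : fstOcc k f j = a.val := by
    have h1 : fstOcc k f j ∈ {m : ℕ | ∃ h : m < 2 * k + 1, f ⟨m, h⟩ = j} :=
      Nat.sInf_mem ⟨a.val, haS⟩
    have h2 : fstOcc k f j ≤ a.val := Nat.sInf_le haS
    rcases hSsub _ h1 with h | h
    · exact h
    · omega
  have hsnd : sndOcc k f j = b.val := by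
    have h1 : sndOcc k f j ∈ {m : ℕ | ∃ h : m < 2 * k + 1, f ⟨m, h⟩ = j} :=
      Nat.sSup_mem ⟨a.val, haS⟩ hbdd
    have h2 : b.val ≤ sndOcc k f j := le_csSup hbdd hbS
    rcases hSsub _ h1 with h | h
    · omega
    · exact h
  have hfst1 : 1 ≤ fstOcc k f j := by
    rcases Nat.eq_zero_or_pos (fstOcc k f j) with h | h
    · exfalso
      have ha0 : a = ⟨0, by omega⟩ := by
        apply Fin.val_injective
        simp only []
        omega
      have : j = 0 := by rw [← hfa, ha0]; exact hf.1
      omega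
    · exact h
  have hflt : fstOcc k f j < 2 * k + 1 := by rw [hfst]; exact a.isLt
  have hslt : sndOcc k f j < 2 * k + 1 := by rw [hsnd]; exact b.isLt
  refine ⟨hfst1, by omega, hslt, ⟨hflt, ?_⟩, ⟨hslt, ?_⟩, ?_⟩
  · have h3 : (⟨fstOcc k f j, hflt⟩ : Fin (2 * k + 1)) = a := Fin.val_injective hfst
    rw [h3]; exact hfa
  · have h3 : (⟨sndOcc k f j, hslt⟩ : Fin (2 * k + 1)) = b := Fin.val_injective hsnd
    rw [h3]; exact hfb
  · intro i hi
    rcases (hmem i).mp hi with h | h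
    · left; rw [hfst, h]
    · right; rw [hsnd, h]

lemma noncross (hf : IsNest k f) {i j : ℕ} (hi1 : 1 ≤ i) (hik : i ≤ k) (hj1 : 1 ≤ j)
    (hjk : j ≤ k) (hij : i ≠ j) (h1 : fstOcc k f i < fstOcc k f j)
    (h2 : fstOcc k f j < sndOcc k f i) : sndOcc k f j < sndOcc k f i := by
  obtain ⟨-, -, -, ⟨hia, hfi⟩, ⟨hib, hfi'⟩, -⟩ := occ_spec hf hi1 hik
  obtain ⟨-, -, -, ⟨hja, hfj⟩, ⟨hjb, hfj'⟩, -⟩ := occ_spec hf hj1 hjk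
  have key := hf.2.2.2 ⟨fstOcc k f i, hia⟩ ⟨sndOcc k f i, hib⟩ ⟨fstOcc k f j, hja⟩
    ⟨sndOcc k f j, hjb⟩
  rw [hfi, hfi', hfj, hfj'] at key
  have h3 := key rfl rfl hi1 hj1 hij (by simpa [Fin.mk_lt_mk] using h1)
    (by simpa [Fin.mk_lt_mk] using h2)
  rw [Fin.mk_lt_mk, not_lt] at h3
  have hne : sndOcc k f j ≠ sndOcc k f i := fun hh => hij (eq_of_occ hfi' hfj' hh.symm)
  omega

lemma tricho (hf : IsNest k f) {i j : ℕ} (hi1 : 1 ≤ i) (hik : i ≤ k) (hj1 : 1 ≤ j) (hjk : j ≤ k)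
    (hij : i ≠ j) :
    NestInside k f i j ∨ NestInside k f j i ∨
      sndOcc k f i < fstOcc k f j ∨ sndOcc k f j < fstOcc k f i := by
  obtain ⟨-, habi, -, ⟨hia, hfi⟩, ⟨hib, hfi'⟩, -⟩ := occ_spec hf hi1 hik
  obtain ⟨-, habj, -, ⟨hja, hfj⟩, ⟨hjb, hfj'⟩, -⟩ := occ_spec hf hj1 hjk
  rcases lt_trichotomy (fstOcc k f i) (fstOcc k f j) with h | h | h
  · rcases lt_or_ge (fstOcc k f j) (sndOcc k f i) with h2 | h2
    · exact Or.inl ⟨h, noncross hf hi1 hik hj1 hjk hij h h2⟩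
    · have h3 : sndOcc k f i ≠ fstOcc k f j := fun hh => hij (eq_of_occ hfi' hfj hh)
      exact Or.inr (Or.inr (Or.inl (by omega)))
  · exact absurd (eq_of_occ hfi hfj h) hij
  · rcases lt_or_ge (fstOcc k f i) (sndOcc k f j) with h2 | h2
    · exact Or.inr (Or.inl ⟨h, noncross hf hj1 hjk hi1 hik (Ne.symm hij) h h2⟩)
    · have h3 : sndOcc k f j ≠ fstOcc k f i := fun hh => hij (eq_of_occ hfj' hfi hh).symm
      exact Or.inr (Or.inr (Or.inr (by omega)))

lemma nestDepth_eq (k : ℕ) (f : Fin (2 * k + 1) → ℕ) (j : ℕ)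
    [DecidablePred fun j' => 1 ≤ j' ∧ j' ≠ j ∧ NestInside k f j' j] :
    nestDepth k f j =
      ((Finset.range (k + 1)).filter fun j' => 1 ≤ j' ∧ j' ≠ j ∧ NestInside k f j' j).card := by
  unfold nestDepth
  congr 1
  ext x
  simp [Finset.mem_filter]

lemma sigA_eq (k : ℕ) (f : Fin (2 * k + 1) → ℕ) (j : ℕ)
    [DecidablePred fun j' => 1 ≤ j' ∧ j' ≠ j ∧ NestInside k f j j'] :
    sigA k f j =
      ((Finset.range (k + 1)).filter fun j' => 1 ≤ j' ∧ j' ≠ j ∧ NestInside k f j j').card := by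
  unfold sigA
  congr 1
  ext x
  simp [Finset.mem_filter]

end DyckSig
namespace DyckSig

variable {k : ℕ} {f g : Fin (2 * k + 1) → ℕ}

lemma depth_lt_of_inside (hf : IsNest k f) {i j : ℕ} (hi1 : 1 ≤ i) (hik : i ≤ k)
    (hj1 : 1 ≤ j) (hjk : j ≤ k) (hin : NestInside k f i j) :
    nestDepth k f i < nestDepth k f j := by
  classical
  rw [nestDepth_eq, nestDepth_eq]
  refine Finset.card_lt_card ((Finset.ssubset_iff_of_subset ?_).mpr ⟨i, ?_, ?_⟩)
  · intro c hc
    simp only [Finset.mem_filter, Finset.mem_range] at hc ⊢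
    obtain ⟨hcr, hc1, hcne, hcin⟩ := hc
    have hcnej : c ≠ j := by
      rintro rfl
      obtain ⟨u1, u2⟩ := nestInside_iff.mp hcin
      obtain ⟨v1, v2⟩ := nestInside_iff.mp hin
      omega
    exact ⟨hcr, hc1, hcnej, nestInside_iff.mpr
      ⟨lt_trans (nestInside_iff.mp hcin).1 (nestInside_iff.mp hin).1,
       lt_trans (nestInside_iff.mp hin).2 (nestInside_iff.mp hcin).2⟩⟩
  · simp only [Finset.mem_filter, Finset.mem_range]
    refine ⟨by omega, hi1, ?_, hin⟩
    rintro rfl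
    exact lt_irrefl _ (nestInside_iff.mp hin).1
  · simp only [Finset.mem_filter, Finset.mem_range]
    rintro ⟨-, -, hne, -⟩
    exact hne rfl

lemma exists_rank : ∀ (d : ℕ) (s : Finset ℕ), d < s.card →
    ∃ v ∈ s, (s.filter (· < v)).card = d := by
  intro d
  induction d with
  | zero =>
    intro s hs
    have hne : s.Nonempty := Finset.card_pos.mp (by omega)
    refine ⟨s.min' hne, s.min'_mem hne, ?_⟩
    rw [Finset.card_eq_zero, Finset.filter_eq_empty_iff]
    intro w hw
    exact not_lt.mpr (s.min'_le w hw)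
  | succ d IH =>
    intro s hs
    have hne : s.Nonempty := Finset.card_pos.mp (by omega)
    obtain ⟨v, hv, hcard⟩ := IH (s.erase (s.min' hne))
      (by rw [Finset.card_erase_of_mem (s.min'_mem hne)]; omega)
    have hvne : v ≠ s.min' hne := (Finset.mem_erase.mp hv).1
    have hvs : v ∈ s := (Finset.mem_erase.mp hv).2
    refine ⟨v, hvs, ?_⟩
    have hmv : s.min' hne < v := lt_of_le_of_ne (s.min'_le v hvs) (Ne.symm hvne)
    have hsplit : s.filter (· < v) = insert (s.min' hne) ((s.erase (s.min' hne)).filter (· < v)) := by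
      ext w
      simp only [Finset.mem_filter, Finset.mem_erase, Finset.mem_insert]
      constructor
      · rintro ⟨hw, hwv⟩
        by_cases h : w = s.min' hne
        · exact Or.inl h
        · exact Or.inr ⟨⟨h, hw⟩, hwv⟩
      · rintro (rfl | ⟨⟨-, hw⟩, hwv⟩)
        · exact ⟨s.min'_mem hne, hmv⟩
        · exact ⟨hw, hwv⟩
    rw [hsplit, Finset.card_insert_of_notMem (by simp), hcard]

lemma chain_cmp (hf : IsNest k f) {c m ℓ : ℕ} (hc1 : 1 ≤ c) (hck : c ≤ k) (hm1 : 1 ≤ m)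
    (hmk : m ≤ k) (hl1 : 1 ≤ ℓ) (hlk : ℓ ≤ k) (hcm : c ≠ m)
    (h1 : NestInside k f c ℓ) (h2 : NestInside k f m ℓ) :
    NestInside k f c m ∨ NestInside k f m c := by
  obtain ⟨-, habl, -, -, -, -⟩ := occ_spec hf hl1 hlk
  obtain ⟨u1, u2⟩ := nestInside_iff.mp h1
  obtain ⟨v1, v2⟩ := nestInside_iff.mp h2
  rcases tricho hf hc1 hck hm1 hmk hcm with h | h | h | h
  · exact Or.inl h
  · exact Or.inr h
  · exfalso; omega
  · exfalso; omega

lemma exists_ancestor (hf : IsNest k f) {ℓ d : ℕ} (hl1 : 1 ≤ ℓ) (hlk : ℓ ≤ k)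
    (hd : d < nestDepth k f ℓ) :
    ∃ m, 1 ≤ m ∧ m ≤ k ∧ m ≠ ℓ ∧ NestInside k f m ℓ ∧ nestDepth k f m = d := by
  classical
  rw [nestDepth_eq] at hd
  set C := (Finset.range (k + 1)).filter (fun c => 1 ≤ c ∧ c ≠ ℓ ∧ NestInside k f c ℓ) with hCdef
  have hmemC : ∀ c, c ∈ C → 1 ≤ c ∧ c ≤ k ∧ c ≠ ℓ ∧ NestInside k f c ℓ := by
    intro c hc
    simp only [hCdef, Finset.mem_filter, Finset.mem_range] at hc
    exact ⟨hc.2.1, by omega, hc.2.2.1, hc.2.2.2⟩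
  have hinj : Set.InjOn (fstOcc k f) ↑C := by
    intro c hc c' hc' hcc
    obtain ⟨h1, h2, -, -⟩ := hmemC c (Finset.mem_coe.mp hc)
    obtain ⟨h1', h2', -, -⟩ := hmemC c' (Finset.mem_coe.mp hc')
    obtain ⟨-, -, -, ⟨ha, hfa⟩, -, -⟩ := occ_spec hf h1 h2
    obtain ⟨-, -, -, ⟨ha', hfa'⟩, -, -⟩ := occ_spec hf h1' h2'
    exact eq_of_occ hfa hfa' hcc
  obtain ⟨v, hv, hcv⟩ := exists_rank d (C.image (fstOcc k f))
    (by rw [Finset.card_image_of_injOn hinj]; exact hd)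
  obtain ⟨m, hmC, rfl⟩ := Finset.mem_image.mp hv
  obtain ⟨hm1, hmk, hmne, hmNI⟩ := hmemC m hmC
  refine ⟨m, hm1, hmk, hmne, hmNI, ?_⟩
  rw [nestDepth_eq]
  have hCm : (Finset.range (k + 1)).filter (fun c => 1 ≤ c ∧ c ≠ m ∧ NestInside k f c m)
      = C.filter (fun c => fstOcc k f c < fstOcc k f m) := by
    ext c
    simp only [hCdef, Finset.mem_filter, Finset.mem_range]
    constructor
    · rintro ⟨hcr, hc1, hcm, hNI⟩
      have hcl : c ≠ ℓ := by
        rintro rfl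
        obtain ⟨u1, u2⟩ := nestInside_iff.mp hNI
        obtain ⟨v1, v2⟩ := nestInside_iff.mp hmNI
        omega
      exact ⟨⟨hcr, hc1, hcl, nestInside_iff.mpr
        ⟨lt_trans (nestInside_iff.mp hNI).1 (nestInside_iff.mp hmNI).1,
         lt_trans (nestInside_iff.mp hmNI).2 (nestInside_iff.mp hNI).2⟩⟩,
        (nestInside_iff.mp hNI).1⟩
    · rintro ⟨⟨hcr, hc1, hcl, hNIl⟩, hlt⟩
      have hck : c ≤ k := by omega
      have hcm : c ≠ m := by rintro rfl; omega
      rcases chain_cmp hf hc1 hck hm1 hmk hl1 hlk hcm hNIl hmNI with h | h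
      · exact ⟨hcr, hc1, hcm, h⟩
      · exact absurd (nestInside_iff.mp h).1 (by omega)
  rw [hCm]
  have hcardi : ((C.filter fun c => fstOcc k f c < fstOcc k f m)).card
      = ((C.filter fun c => fstOcc k f c < fstOcc k f m).image (fstOcc k f)).card :=
    (Finset.card_image_of_injOn (hinj.mono (by
      intro x hx
      exact Finset.mem_coe.mpr (Finset.mem_of_mem_filter _ (Finset.mem_coe.mp hx))))).symm
  rw [Finset.filter_image] at hcv
  rw [hcardi]
  exact hcv

end DyckSig
namespace DyckSig

variable {k : ℕ} {f g : Fin (2 * k + 1) → ℕ}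

lemma eq_zero_iff (hf : IsNest k f) : ∀ i : Fin (2 * k + 1), f i = 0 → i = ⟨0, by omega⟩ := by
  classical
  have hcard : (univ.filter fun i : Fin (2 * k + 1) => f i = 0).card = 1 := by
    have hpart := Finset.card_eq_sum_card_fiberwise
      (f := f) (s := (univ : Finset (Fin (2 * k + 1)))) (t := Finset.range (k + 1))
      (fun x _ => Finset.mem_range.mpr (by have := hf.2.1 x; omega))
    rw [Finset.card_univ, Fintype.card_fin, Finset.sum_range_succ'] at hpart
    have h2 : ∀ i ∈ Finset.range k,
        (univ.filter fun x : Fin (2 * k + 1) => f x = (i + 1)).card = 2 := by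
      intro i hi
      exact hf.2.2.1 (i + 1) (by omega) (by simp at hi; omega)
    rw [Finset.sum_congr rfl h2, Finset.sum_const, Finset.card_range, smul_eq_mul] at hpart
    omega
  obtain ⟨x, hx⟩ := Finset.card_eq_one.mp hcard
  have h0 : (⟨0, by omega⟩ : Fin (2 * k + 1)) ∈ univ.filter fun i : Fin (2 * k + 1) => f i = 0 :=
    Finset.mem_filter.mpr ⟨Finset.mem_univ _, hf.1⟩
  intro i hi
  have hi' : i ∈ univ.filter fun i : Fin (2 * k + 1) => f i = 0 :=
    Finset.mem_filter.mpr ⟨Finset.mem_univ _, hi⟩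
  rw [hx] at h0 hi'
  rw [Finset.mem_singleton.mp hi', ← Finset.mem_singleton.mp h0]

lemma letter_of_pos (hf : IsNest k f) {p : ℕ} (hp1 : 1 ≤ p) (hpk : p < 2 * k + 1) :
    ∃ ℓ, 1 ≤ ℓ ∧ ℓ ≤ k ∧ (p = fstOcc k f ℓ ∨ p = sndOcc k f ℓ) ∧
      fstOcc k f ℓ ≤ p ∧ p ≤ sndOcc k f ℓ := by
  have h1 : 1 ≤ f ⟨p, hpk⟩ := by
    rcases Nat.eq_zero_or_pos (f ⟨p, hpk⟩) with h | h
    · exfalso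
      have := eq_zero_iff hf _ h
      have := congrArg Fin.val this
      simp at this
      omega
    · exact h
  have hk1 : f ⟨p, hpk⟩ ≤ k := hf.2.1 _
  obtain ⟨-, hab, -, -, -, huniq⟩ := occ_spec hf h1 hk1
  rcases huniq ⟨p, hpk⟩ rfl with h | h
  · have h' : p = fstOcc k f (f ⟨p, hpk⟩) := h
    exact ⟨f ⟨p, hpk⟩, h1, hk1, Or.inl h', by omega, by omega⟩
  · have h' : p = sndOcc k f (f ⟨p, hpk⟩) := h
    exact ⟨f ⟨p, hpk⟩, h1, hk1, Or.inr h', by omega, by omega⟩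

lemma lt_of_depth_lt (hc : NestCanonical k f) {i j : ℕ} (hi1 : 1 ≤ i) (hik : i ≤ k)
    (hj1 : 1 ≤ j) (hjk : j ≤ k) (h : nestDepth k f i < nestDepth k f j) : i < j :=
  (hc j i hj1 hjk hi1 hik).mpr (Or.inl h)

lemma lt_of_fst (hc : NestCanonical k f) {i j : ℕ} (hi1 : 1 ≤ i) (hik : i ≤ k)
    (hj1 : 1 ≤ j) (hjk : j ≤ k) (hd : nestDepth k f i = nestDepth k f j)
    (hfst : fstOcc k f j < fstOcc k f i) : i < j :=
  (hc j i hj1 hjk hi1 hik).mpr (Or.inr ⟨hd, hfst⟩)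

lemma interval_card (hf : IsNest k f) {j : ℕ} (hj1 : 1 ≤ j) (hjk : j ≤ k) :
    sndOcc k f j - fstOcc k f j = 2 * sigA k f j + 1 := by
  classical
  obtain ⟨hA1, hAB, hBn, ⟨hja, hfj⟩, ⟨hjb, hfj'⟩, huniq⟩ := occ_spec hf hj1 hjk
  set T : Finset (Fin (2 * k + 1)) :=
    univ.filter (fun i => fstOcc k f j < i.val ∧ i.val < sndOcc k f j) with hT
  have hTcard : T.card = sndOcc k f j - fstOcc k f j - 1 := by
    have himg : T.image Fin.val = Finset.Ioo (fstOcc k f j) (sndOcc k f j) := by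
      ext p
      simp only [hT, Finset.mem_image, Finset.mem_filter, Finset.mem_univ, true_and,
        Finset.mem_Ioo]
      constructor
      · rintro ⟨i, ⟨h1, h2⟩, rfl⟩; exact ⟨h1, h2⟩
      · rintro ⟨h1, h2⟩; exact ⟨⟨p, by omega⟩, ⟨h1, h2⟩, rfl⟩
    have hcim := Finset.card_image_of_injective T Fin.val_injective
    rw [himg] at hcim
    rw [← hcim, Nat.card_Ioo]
  set L := (Finset.range (k + 1)).filter (fun j' => 1 ≤ j' ∧ j' ≠ j ∧ NestInside k f j j')
    with hL
  have hsig : sigA k f j = L.card := sigA_eq k f j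
  have hT2 : T = L.biUnion (fun j' => univ.filter (fun i => f i = j')) := by
    ext i
    simp only [hT, hL, Finset.mem_filter, Finset.mem_biUnion, Finset.mem_range,
      Finset.mem_univ, true_and]
    constructor
    · rintro ⟨h1, h2⟩
      have hne0 : 1 ≤ f i := by
        rcases Nat.eq_zero_or_pos (f i) with h | h
        · exfalso
          have h3 := congrArg Fin.val (eq_zero_iff hf i h)
          simp at h3
          have h4 : i.val = 0 := congrArg Fin.val (eq_zero_iff hf i h)
          omega
        · exact h
      have hik' : f i ≤ k := hf.2.1 i
      have hnej : f i ≠ j := by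
        intro h
        rcases huniq i h with h' | h' <;> omega
      obtain ⟨-, hab', -, -, -, huniq'⟩ := occ_spec hf hne0 hik'
      have hio : i.val = fstOcc k f (f i) ∨ i.val = sndOcc k f (f i) := huniq' i rfl
      rcases tricho hf hj1 hjk hne0 hik' (Ne.symm hnej) with h | h | h | h
      · exact ⟨f i, ⟨by omega, hne0, hnej, h⟩, rfl⟩
      · obtain ⟨u1, u2⟩ := nestInside_iff.mp h
        exfalso; rcases hio with h' | h' <;> omega
      · exfalso; rcases hio with h' | h' <;> omega
      · exfalso; rcases hio with h' | h' <;> omega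
    · rintro ⟨j', ⟨hjr, hj'1, hj'j, hNI⟩, hfi⟩
      obtain ⟨-, hab', -, -, -, huniq'⟩ := occ_spec hf hj'1 (by omega : j' ≤ k)
      obtain ⟨u1, u2⟩ := nestInside_iff.mp hNI
      rcases huniq' i hfi with h | h <;> omega
  have hdisj : ∀ x ∈ L, ∀ y ∈ L, x ≠ y →
      Disjoint (univ.filter (fun i : Fin (2 * k + 1) => f i = x))
        (univ.filter (fun i : Fin (2 * k + 1) => f i = y)) := by
    intro x hx y hy hxy
    rw [Finset.disjoint_left]
    intro i h1 h2
    simp only [Finset.mem_filter] at h1 h2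
    exact hxy (h1.2 ▸ h2.2)
  have hcards : T.card = 2 * L.card := by
    rw [hT2, Finset.card_biUnion hdisj]
    have h2 : ∀ j' ∈ L, (univ.filter (fun i : Fin (2 * k + 1) => f i = j')).card = 2 := by
      intro j' hj'
      simp only [hL, Finset.mem_filter, Finset.mem_range] at hj'
      exact hf.2.2.1 j' hj'.2.1 (by omega)
    rw [Finset.sum_congr rfl h2, Finset.sum_const, smul_eq_mul]
    ring
  omega

lemma sigA_top (hf : IsNest k f) (hc : NestCanonical k f) (hk : 1 ≤ k) : sigA k f k = 0 := by
  classical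
  rw [sigA_eq, Finset.card_eq_zero, Finset.filter_eq_empty_iff]
  rintro j' hj' ⟨h1, hne, hNI⟩
  have hj'k : j' ≤ k := by simp only [Finset.mem_range] at hj'; omega
  have hd := depth_lt_of_inside hf hk le_rfl h1 hj'k hNI
  have := lt_of_depth_lt hc hk le_rfl h1 hj'k hd
  omega

end DyckSig
namespace DyckSig

variable {k : ℕ} {f g : Fin (2 * k + 1) → ℕ}

open Classical in
noncomputable def statA (k : ℕ) (f : Fin (2 * k + 1) → ℕ) (j d : ℕ) : Finset ℕ :=
  (Finset.Icc 1 (2 * k)).filter fun p =>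
    (∀ i, 1 ≤ i → i < j → p ≠ fstOcc k f i ∧ p ≠ sndOcc k f i) ∧
    (∀ i, 1 ≤ i → i < j → nestDepth k f i = d → ¬(fstOcc k f i ≤ p ∧ p ≤ sndOcc k f i))

lemma mem_statA {p j d : ℕ} :
    p ∈ statA k f j d ↔ (1 ≤ p ∧ p ≤ 2 * k) ∧
      (∀ i, 1 ≤ i → i < j → p ≠ fstOcc k f i ∧ p ≠ sndOcc k f i) ∧
      (∀ i, 1 ≤ i → i < j → nestDepth k f i = d → ¬(fstOcc k f i ≤ p ∧ p ≤ sndOcc k f i)) := by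
  classical
  simp only [statA, Finset.mem_filter, Finset.mem_Icc]

lemma statA_empty (hf : IsNest k f) (hc : NestCanonical k f) {j d : ℕ}
    (hj1 : 1 ≤ j) (hjk : j ≤ k) (hd : d < nestDepth k f j) : statA k f j d = ∅ := by
  classical
  rw [Finset.eq_empty_iff_forall_notMem]
  intro p hp
  rw [mem_statA] at hp
  obtain ⟨⟨hp1, hp2⟩, hend, hint⟩ := hp
  obtain ⟨ℓ, hl1, hlk, hocc, hlow, hhigh⟩ := letter_of_pos hf hp1 (by omega)
  rcases Nat.lt_trichotomy (nestDepth k f ℓ) d with he | he | he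
  · have hlj : ℓ < j := lt_of_depth_lt hc hl1 hlk hj1 hjk (by omega)
    rcases hocc with h | h
    · exact (hend ℓ hl1 hlj).1 h
    · exact (hend ℓ hl1 hlj).2 h
  · have hlj : ℓ < j := lt_of_depth_lt hc hl1 hlk hj1 hjk (by omega)
    exact hint ℓ hl1 hlj he ⟨hlow, hhigh⟩
  · obtain ⟨m, hm1, hmk, hmne, hNI, hmd⟩ := exists_ancestor hf hl1 hlk he
    have hmj : m < j := lt_of_depth_lt hc hm1 hmk hj1 hjk (by omega)
    obtain ⟨u1, u2⟩ := nestInside_iff.mp hNI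
    exact hint m hm1 hmj hmd ⟨by omega, by omega⟩

lemma snd_mem_statA (hf : IsNest k f) {j : ℕ} (hj1 : 1 ≤ j) (hjk : j ≤ k) :
    sndOcc k f j ∈ statA k f j (nestDepth k f j) := by
  obtain ⟨hA1, hAB, hBn, ⟨hja, hfj⟩, ⟨hjb, hfj'⟩, huniq⟩ := occ_spec hf hj1 hjk
  rw [mem_statA]
  refine ⟨⟨by omega, by omega⟩, ?_, ?_⟩
  · intro i hi1 hij
    have hik : i ≤ k := by omega
    obtain ⟨-, -, -, ⟨hia, hfi⟩, ⟨hib, hfi'⟩, -⟩ := occ_spec hf hi1 hik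
    constructor
    · intro h
      exact absurd (eq_of_occ hfj' hfi h) (by omega)
    · intro h
      exact absurd (eq_of_occ hfj' hfi' h) (by omega)
  · rintro i hi1 hij hdi ⟨hl, hr⟩
    have hik : i ≤ k := by omega
    have hine : i ≠ j := by omega
    obtain ⟨-, hab', -, -, -, -⟩ := occ_spec hf hi1 hik
    rcases tricho hf hi1 hik hj1 hjk hine with h | h | h | h
    · exact absurd (depth_lt_of_inside hf hi1 hik hj1 hjk h) (by omega)
    · exact absurd (depth_lt_of_inside hf hj1 hjk hi1 hik h) (by omega)
    · omega
    · omega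

lemma statA_le_snd (hf : IsNest k f) (hc : NestCanonical k f) {j : ℕ}
    (hj1 : 1 ≤ j) (hjk : j ≤ k) :
    ∀ p ∈ statA k f j (nestDepth k f j), p ≤ sndOcc k f j := by
  intro p hp
  by_contra hgt
  push_neg at hgt
  rw [mem_statA] at hp
  obtain ⟨⟨hp1, hp2⟩, hend, hint⟩ := hp
  obtain ⟨hA1, hAB, hBn, ⟨hja, hfj⟩, ⟨hjb, hfj'⟩, huniq⟩ := occ_spec hf hj1 hjk
  obtain ⟨ℓ, hl1, hlk, hocc, hlow, hhigh⟩ := letter_of_pos hf hp1 (by omega)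
  rcases Nat.lt_trichotomy (nestDepth k f ℓ) (nestDepth k f j) with he | he | he
  · have hlj : ℓ < j := lt_of_depth_lt hc hl1 hlk hj1 hjk he
    rcases hocc with h | h
    · exact (hend ℓ hl1 hlj).1 h
    · exact (hend ℓ hl1 hlj).2 h
  · have hlne : ℓ ≠ j := by
      rintro rfl
      rcases hocc with h | h <;> omega
    obtain ⟨-, hab', -, -, -, -⟩ := occ_spec hf hl1 hlk
    rcases tricho hf hl1 hlk hj1 hjk hlne with h | h | h | h
    · exact absurd (depth_lt_of_inside hf hl1 hlk hj1 hjk h) (by omega)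
    · exact absurd (depth_lt_of_inside hf hj1 hjk hl1 hlk h) (by omega)
    · omega
    · have hfst : fstOcc k f j < fstOcc k f ℓ := by omega
      have hlj : ℓ < j := lt_of_fst hc hl1 hlk hj1 hjk he hfst
      exact hint ℓ hl1 hlj he ⟨hlow, hhigh⟩
  · obtain ⟨m, hm1, hmk, hmne, hNI, hmd⟩ := exists_ancestor hf hl1 hlk he
    obtain ⟨u1, u2⟩ := nestInside_iff.mp hNI
    by_cases hmj : m = j
    · subst hmj
      omega
    · obtain ⟨-, habm, -, -, -, -⟩ := occ_spec hf hm1 hmk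
      rcases tricho hf hm1 hmk hj1 hjk hmj with h | h | h | h
      · exact absurd (depth_lt_of_inside hf hm1 hmk hj1 hjk h) (by omega)
      · exact absurd (depth_lt_of_inside hf hj1 hjk hm1 hmk h) (by omega)
      · omega
      · have hfst : fstOcc k f j < fstOcc k f m := by omega
        have hmj' : m < j := lt_of_fst hc hm1 hmk hj1 hjk hmd hfst
        exact hint m hm1 hmj' hmd ⟨by omega, by omega⟩

lemma ext_of_occ (hf : IsNest k f) (hg : IsNest k g)
    (h : ∀ j, 1 ≤ j → j ≤ k → fstOcc k f j = fstOcc k g j ∧ sndOcc k f j = sndOcc k g j) :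
    f = g := by
  funext i
  by_cases h0 : f i = 0
  · have hi0 : i = ⟨0, by omega⟩ := eq_zero_iff hf i h0
    rw [h0, hi0, hg.1]
  · set v := f i with hv0
    have h1 : 1 ≤ v := by omega
    have hik : v ≤ k := hf.2.1 i
    obtain ⟨-, -, -, ⟨hga, hgfa⟩, ⟨hgb, hgfb⟩, -⟩ := occ_spec hg h1 hik
    obtain ⟨-, -, -, -, -, huniq⟩ := occ_spec hf h1 hik
    obtain ⟨e1, e2⟩ := h v h1 hik
    rcases huniq i hv0.symm with hv | hv
    · have hieq : i = ⟨fstOcc k g v, hga⟩ :=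
        Fin.val_injective (show i.val = fstOcc k g v by omega)
      rw [hieq]
      exact hgfa.symm
    · have hieq : i = ⟨sndOcc k g v, hgb⟩ :=
        Fin.val_injective (show i.val = sndOcc k g v by omega)
      rw [hieq]
      exact hgfb.symm

end DyckSig
namespace DyckSig

variable {k : ℕ} {f g : Fin (2 * k + 1) → ℕ}

theorem main_inj (hf : IsNest k f) (hcf : NestCanonical k f) (hg : IsNest k g)
    (hcg : NestCanonical k g)
    (hsig : ∀ j, 1 ≤ j → j < k → sigA k f j = sigA k g j) : f = g := by
  by_cases hk : k = 0
  · subst hk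
    funext i
    have h0 : i = ⟨0, by omega⟩ := Fin.val_injective (by omega)
    rw [h0, hf.1, hg.1]
  · have hk1 : 1 ≤ k := by omega
    have hsig' : ∀ j, 1 ≤ j → j ≤ k → sigA k f j = sigA k g j := by
      intro j h1 h2
      by_cases hjk : j = k
      · subst hjk
        rw [sigA_top hf hcf hk1, sigA_top hg hcg hk1]
      · exact hsig j h1 (by omega)
    have main : ∀ j, 1 ≤ j → j ≤ k →
        fstOcc k f j = fstOcc k g j ∧ sndOcc k f j = sndOcc k g j ∧
          nestDepth k f j = nestDepth k g j := by
      intro j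
      induction j using Nat.strong_induction_on with
      | _ j IH =>
        intro hj1 hjk
        have hstat : ∀ d, statA k f j d = statA k g j d := by
          intro d
          ext p
          rw [mem_statA, mem_statA]
          constructor
          · rintro ⟨hpr, a3, a4⟩
            refine ⟨hpr, fun i h1 h2 => ?_, fun i h1 h2 h3 => ?_⟩
            · obtain ⟨e1, e2, -⟩ := IH i h2 h1 (by omega)
              rw [← e1, ← e2]
              exact a3 i h1 h2
            · obtain ⟨e1, e2, e3⟩ := IH i h2 h1 (by omega)
              rw [← e1, ← e2]
              exact a4 i h1 h2 (by omega)
          · rintro ⟨hpr, a3, a4⟩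
            refine ⟨hpr, fun i h1 h2 => ?_, fun i h1 h2 h3 => ?_⟩
            · obtain ⟨e1, e2, -⟩ := IH i h2 h1 (by omega)
              rw [e1, e2]
              exact a3 i h1 h2
            · obtain ⟨e1, e2, e3⟩ := IH i h2 h1 (by omega)
              rw [e1, e2]
              exact a4 i h1 h2 (by omega)
        have hdep : nestDepth k f j = nestDepth k g j := by
          by_contra hne
          rcases Nat.lt_or_ge (nestDepth k f j) (nestDepth k g j) with h | h
          · have h1 : sndOcc k f j ∈ statA k f j (nestDepth k f j) := snd_mem_statA hf hj1 hjk
            rw [hstat, statA_empty hg hcg hj1 hjk h] at h1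
            exact absurd h1 (Finset.notMem_empty _)
          · have h2 : sndOcc k g j ∈ statA k g j (nestDepth k g j) := snd_mem_statA hg hj1 hjk
            rw [← hstat, statA_empty hf hcf hj1 hjk (by omega)] at h2
            exact absurd h2 (Finset.notMem_empty _)
        have hsnd : sndOcc k f j = sndOcc k g j := by
          have h1 : sndOcc k f j ∈ statA k g j (nestDepth k g j) := by
            rw [← hstat, ← hdep]
            exact snd_mem_statA hf hj1 hjk
          have h2 : sndOcc k g j ∈ statA k f j (nestDepth k f j) := by
            rw [hstat, hdep]
            exact snd_mem_statA hg hj1 hjk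
          have l1 := statA_le_snd hg hcg hj1 hjk _ h1
          have l2 := statA_le_snd hf hcf hj1 hjk _ h2
          omega
        have e1 := interval_card hf hj1 hjk
        have e2 := interval_card hg hj1 hjk
        have e3 := hsig' j hj1 hjk
        obtain ⟨-, hfab, -, -, -, -⟩ := occ_spec hf hj1 hjk
        obtain ⟨-, hgab, -, -, -, -⟩ := occ_spec hg hj1 hjk
        exact ⟨by omega, hsnd, hdep⟩
    exact ext_of_occ hf hg (fun j h1 h2 => ⟨(main j h1 h2).1, (main j h1 h2).2.1⟩)

end DyckSig

/-- `A_j` equals the halfway-distance floor `⌊d_j/2⌋` between the two occurrences of `j`,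
and the signature map is injective on Dyck nests: two Dyck nests with equal signatures
`(A_{k-1},...,A_1)` are equal. -/
theorem signature_injective (k : ℕ) :
    (∀ f, IsNest k f → NestCanonical k f → ∀ j, 1 ≤ j → j ≤ k →
      (sndOcc k f j - fstOcc k f j) / 2 = sigA k f j) ∧
    ∀ f g, IsNest k f → NestCanonical k f → IsNest k g → NestCanonical k g →
      (∀ j, 1 ≤ j → j < k → sigA k f j = sigA k g j) → f = g := by
  constructor
  · intro f hf _ j hj1 hjk
    have h := DyckSig.interval_card hf hj1 hjk
    omega
  · intro f g hf hcf hg hcg hsig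
    exact DyckSig.main_inj hf hcf hg hcg hsig
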